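/- Suppose Theorem (tripartite Corrádi–Hajnal) holds for all N divisible by 3 with N ≥ N0: i.e., every balanced tripartite graph on 3N vertices with each vertex adjacent to at least (2/3)N vertices in each other class has a perfect triangle tiling or equals Γ_3(N/3) with N/3 odd. Then for N = 3t + 1 with 3t ≥ N0: every balanced tripartite graph G on 3N vertices in which every vertex has at least ⌈(2/3)N⌉ = 2t+1 neighbors in each other class contains a perfect triangle tiling. -/

import Mathlib

/-- The graph `Γ_k` (0-indexed). -/
def gammaGraph (k : ℕ) : SimpleGraph (Fin k × Fin k) where
  Adj p q := p.1 ≠ q.1 ∧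
    ((p.2 ≠ q.2 ∧ (p.2.val < k - 2 ∨ q.2.val < k - 2)) ∨ (p.2 = q.2 ∧ k - 2 ≤ p.2.val))
  symm := by
    constructor
    rintro p q ⟨h1, h2⟩
    refine ⟨h1.symm, ?_⟩
    rcases h2 with ⟨hne, hor⟩ | ⟨heq, hge⟩
    · exact Or.inl ⟨hne.symm, hor.symm⟩
    · exact Or.inr ⟨heq.symm, heq ▸ hge⟩
  loopless := ⟨fun _ h => h.1 rfl⟩

/-- The blow-up `G(t)`. -/
def blowup {V : Type*} (G : SimpleGraph V) (t : ℕ) : SimpleGraph (V × Fin t) :=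
  SimpleGraph.comap Prod.fst G

/-- A perfect triangle tiling: vertex-disjoint triangles covering all vertices. -/
def TriTiling {V : Type*} [DecidableEq V] (G : SimpleGraph V) : Prop :=
  ∃ T : Finset (Finset V), (∀ s ∈ T, G.IsNClique 3 s) ∧
    (T : Set (Finset V)).PairwiseDisjoint id ∧ ∀ v : V, ∃ s ∈ T, v ∈ s

open Finset

-- instances
instance : DecidableRel (gammaGraph 3).Adj := fun p q =>
  inferInstanceAs (Decidable (p.1 ≠ q.1 ∧ ((p.2 ≠ q.2 ∧ (p.2.val < 3 - 2 ∨ q.2.val < 3 - 2)) ∨ (p.2 = q.2 ∧ 3 - 2 ≤ p.2.val))))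

instance {V : Type*} (G : SimpleGraph V) [DecidableRel G.Adj] (t : ℕ) :
    DecidableRel (blowup G t).Adj := fun p q => ‹DecidableRel G.Adj› p.1 q.1

/-- the embedding skipping one vertex per class -/
def emb {n : ℕ} (c : Fin 3 → Fin (n+1)) : Fin 3 × Fin n → Fin 3 × Fin (n+1) :=
  fun p => (p.1, (c p.1).succAbove p.2)

lemma emb_inj {n : ℕ} (c : Fin 3 → Fin (n+1)) : Function.Injective (emb c) := by
  rintro ⟨i, x⟩ ⟨j, y⟩ h
  simp only [emb, Prod.mk.injEq] at h
  obtain ⟨rfl, h2⟩ := h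
  exact Prod.ext rfl ((Fin.succAbove_right_injective) h2)

lemma emb_ne {n : ℕ} (c : Fin 3 → Fin (n+1)) (p : Fin 3 × Fin n) (j : Fin 3) :
    emb c p ≠ (j, c j) := by
  intro h
  have h1 : p.1 = j := congrArg Prod.fst h
  have h2 : (c p.1).succAbove p.2 = c j := congrArg Prod.snd h
  rw [h1] at h2
  exact Fin.succAbove_ne (c j) p.2 h2

lemma emb_surj {n : ℕ} (c : Fin 3 → Fin (n+1)) (w : Fin 3 × Fin (n+1))
    (h : w.2 ≠ c w.1) : ∃ p, emb c p = w := by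
  obtain ⟨x, hx⟩ := Fin.exists_succAbove_eq h
  exact ⟨(w.1, x), Prod.ext rfl hx⟩

instance embDec {n : ℕ} (c : Fin 3 → Fin (n+1)) (G : SimpleGraph (Fin 3 × Fin (n+1)))
    [h : DecidableRel G.Adj] : DecidableRel (G.comap (emb c)).Adj :=
  fun p q => h (emb c p) (emb c q)

/-- image of the degree-filter -/
lemma filter_image {n : ℕ} (c : Fin 3 → Fin (n+1)) (G : SimpleGraph (Fin 3 × Fin (n+1)))
    [DecidableRel G.Adj] (y : Fin 3 × Fin n) (j : Fin 3) :
    (univ.filter fun w : Fin 3 × Fin n => w.1 = j ∧ (G.comap (emb c)).Adj y w).image (emb c)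
      = (univ.filter fun w : Fin 3 × Fin (n+1) => w.1 = j ∧ G.Adj (emb c y) w).erase (j, c j) := by
  ext w
  simp only [mem_image, mem_erase, mem_filter, mem_univ, true_and]
  constructor
  · rintro ⟨p, ⟨rfl, hadj⟩, rfl⟩
    exact ⟨emb_ne c p p.1, rfl, hadj⟩
  · rintro ⟨hne, hj, hadj⟩
    have hw2 : w.2 ≠ c w.1 := by
      intro h
      apply hne
      have : w = (w.1, w.2) := rfl
      rw [this, hj, h, hj]
    obtain ⟨p, rfl⟩ := emb_surj c w hw2
    exact ⟨p, ⟨hj, hadj⟩, rfl⟩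

lemma filter_card {n : ℕ} (c : Fin 3 → Fin (n+1)) (G : SimpleGraph (Fin 3 × Fin (n+1)))
    [DecidableRel G.Adj] (y : Fin 3 × Fin n) (j : Fin 3) :
    (univ.filter fun w : Fin 3 × Fin n => w.1 = j ∧ (G.comap (emb c)).Adj y w).card
      = ((univ.filter fun w : Fin 3 × Fin (n+1) => w.1 = j ∧ G.Adj (emb c y) w).erase (j, c j)).card := by
  rw [← filter_image, card_image_of_injective _ (emb_inj c)]

section helpers
variable {n : ℕ} (c : Fin 3 → Fin (n+1)) (G : SimpleGraph (Fin 3 × Fin (n+1))) [DecidableRel G.Adj]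

lemma filter_card_ge (y : Fin 3 × Fin n) (j : Fin 3) :
    (univ.filter fun w : Fin 3 × Fin n => w.1 = j ∧ (G.comap (emb c)).Adj y w).card
      ≥ (univ.filter fun w : Fin 3 × Fin (n+1) => w.1 = j ∧ G.Adj (emb c y) w).card - 1 := by
  rw [filter_card]
  exact Finset.pred_card_le_card_erase

lemma filter_card_le (y : Fin 3 × Fin n) (j : Fin 3) :
    (univ.filter fun w : Fin 3 × Fin (n+1) => w.1 = j ∧ G.Adj (emb c y) w).card
      ≤ (univ.filter fun w : Fin 3 × Fin n => w.1 = j ∧ (G.comap (emb c)).Adj y w).card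
        + (if G.Adj (emb c y) (j, c j) then 1 else 0) := by
  rw [filter_card, card_erase_eq_ite]
  split_ifs with h1 h2
  · have := card_pos.mpr ⟨(j, c j), h1⟩
    omega
  · exfalso; apply h2; simp only [mem_filter, mem_univ, true_and] at h1; exact h1
  · simp only [mem_filter, mem_univ, true_and, not_and] at h1
    omega
  · omega

end helpers

/-- degree splits as sum over classes -/
lemma degree_split {m : ℕ} (G : SimpleGraph (Fin 3 × Fin m)) [DecidableRel G.Adj]
    (y : Fin 3 × Fin m) :
    G.degree y = ∑ j : Fin 3,
      (univ.filter fun w : Fin 3 × Fin m => w.1 = j ∧ G.Adj y w).card := by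
  rw [← SimpleGraph.card_neighborFinset_eq_degree]
  have : G.neighborFinset y = univ.filter (fun w => G.Adj y w) := by
    ext w; simp [SimpleGraph.mem_neighborFinset]
  rw [this, Finset.card_eq_sum_card_fiberwise (f := Prod.fst) (t := univ) (fun x _ => mem_univ _)]
  apply Finset.sum_congr rfl
  intro j _
  congr 1
  rw [filter_filter]
  apply filter_congr
  intro w _
  exact and_comm

/-- degree of blowup of gamma -/
lemma blowup_degree (t : ℕ) (v : (Fin 3 × Fin 3) × Fin t) :
    (blowup (gammaGraph 3) t).degree v = 4 * t := by
  rw [← SimpleGraph.card_neighborFinset_eq_degree]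
  have : (blowup (gammaGraph 3) t).neighborFinset v
      = ((gammaGraph 3).neighborFinset v.1) ×ˢ (univ : Finset (Fin t)) := by
    ext w
    simp only [SimpleGraph.mem_neighborFinset, mem_product, mem_univ, and_true]
    rfl
  rw [this, card_product, card_univ, Fintype.card_fin]
  have h4 : ∀ u : Fin 3 × Fin 3, ((gammaGraph 3).neighborFinset u).card = 4 := by decide
  rw [h4]

lemma iso_degree {V W : Type*} [Fintype V] [Fintype W] [DecidableEq V] [DecidableEq W]
    (G : SimpleGraph V) (G' : SimpleGraph W) [DecidableRel G.Adj] [DecidableRel G'.Adj]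
    (φ : G ≃g G') (v : V) : G.degree v = G'.degree (φ v) := by
  rw [← SimpleGraph.card_neighborSet_eq_degree, ← SimpleGraph.card_neighborSet_eq_degree]
  exact Fintype.card_congr (φ.mapNeighborSet v)

lemma fin3_cases (x : Fin 3) : x = 0 ∨ x = 1 ∨ x = 2 := by
  fin_cases x <;> decide

lemma key3 (t : ℕ) (i j : Fin 3) (hij : j ≠ i) (d' dG e : Fin 3 → ℕ)
    (hsum : d' 0 + d' 1 + d' 2 = 4 * t) (hdi : d' i = 0)
    (hle : ∀ k, dG k ≤ d' k + e k) (he : ∀ k, e k ≤ 1)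
    (hdg : ∀ k, k ≠ i → 2 * t + 1 ≤ dG k) : e j = 1 := by
  have h0 := hle 0; have h1 := hle 1; have h2 := hle 2
  have f0 := he 0; have f1 := he 1; have f2 := he 2
  fin_cases i <;> fin_cases j
  · exact absurd rfl hij
  · have g1 := hdg 1 (by decide); have g2 := hdg 2 (by decide)
    have hdi' : d' 0 = 0 := hdi
    show e 1 = 1; omega
  · have g1 := hdg 1 (by decide); have g2 := hdg 2 (by decide)
    have hdi' : d' 0 = 0 := hdi
    show e 2 = 1; omega
  · have g1 := hdg 0 (by decide); have g2 := hdg 2 (by decide)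
    have hdi' : d' 1 = 0 := hdi
    show e 0 = 1; omega
  · exact absurd rfl hij
  · have g1 := hdg 0 (by decide); have g2 := hdg 2 (by decide)
    have hdi' : d' 1 = 0 := hdi
    show e 2 = 1; omega
  · have g1 := hdg 0 (by decide); have g2 := hdg 1 (by decide)
    have hdi' : d' 2 = 0 := hdi
    show e 0 = 1; omega
  · have g1 := hdg 0 (by decide); have g2 := hdg 1 (by decide)
    have hdi' : d' 2 = 0 := hdi
    show e 1 = 1; omega
  · exact absurd rfl hij

lemma class_card (t : ℕ) (j : Fin 3) :
    (univ.filter fun w : Fin 3 × Fin (3*t+1) => w.1 = j).card = 3*t+1 := by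
  have : (univ.filter fun w : Fin 3 × Fin (3*t+1) => w.1 = j)
      = ({j} : Finset (Fin 3)) ×ˢ (univ : Finset (Fin (3*t+1))) := by
    ext ⟨a, b⟩
    simp [Finset.mem_product, eq_comm]
  rw [this, card_product, card_singleton, card_univ, Fintype.card_fin, one_mul]

lemma exists_triangle (t : ℕ) (G : SimpleGraph (Fin 3 × Fin (3*t+1))) [DecidableRel G.Adj]
    (hdeg : ∀ v : Fin 3 × Fin (3*t+1), ∀ i, i ≠ v.1 →
      (univ.filter fun w : Fin 3 × Fin (3*t+1) => w.1 = i ∧ G.Adj v w).card ≥ 2*t+1) :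
    ∃ x0 x1 x2 : Fin (3*t+1),
      G.Adj (0, x0) (1, x1) ∧ G.Adj (0, x0) (2, x2) ∧ G.Adj (1, x1) (2, x2) := by
  set v0 : Fin 3 × Fin (3*t+1) := (0, ⟨0, by omega⟩) with hv0
  have h1 := hdeg v0 1 (show (1:Fin 3) ≠ 0 by decide)
  obtain ⟨w1, hw1⟩ : (univ.filter fun w : Fin 3 × Fin (3*t+1) => w.1 = 1 ∧ G.Adj v0 w).Nonempty := by
    rw [← card_pos]; omega
  rw [mem_filter] at hw1
  obtain ⟨-, hw11, hadj1⟩ := hw1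
  have h2a := hdeg v0 2 (show (2:Fin 3) ≠ 0 by decide)
  have h2b := hdeg w1 2 (by rw [hw11]; decide)
  set A := univ.filter fun w : Fin 3 × Fin (3*t+1) => w.1 = 2 ∧ G.Adj v0 w with hA
  set B := univ.filter fun w : Fin 3 × Fin (3*t+1) => w.1 = 2 ∧ G.Adj w1 w with hB
  have hsub : A ∪ B ⊆ univ.filter fun w : Fin 3 × Fin (3*t+1) => w.1 = 2 := by
    apply union_subset <;> intro w hw <;> rw [mem_filter] at hw ⊢ <;> exact ⟨hw.1, hw.2.1⟩
  have hcard : (A ∪ B).card ≤ 3*t+1 := by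
    have := card_le_card hsub
    rwa [class_card] at this
  have hint : 0 < (A ∩ B).card := by
    have := card_union_add_card_inter A B
    omega
  obtain ⟨w2, hw2⟩ := card_pos.mp hint
  rw [mem_inter, mem_filter, mem_filter] at hw2
  obtain ⟨⟨-, hw21, hadj2a⟩, ⟨-, -, hadj2b⟩⟩ := hw2
  refine ⟨v0.2, w1.2, w2.2, ?_, ?_, ?_⟩
  · have : w1 = (1, w1.2) := Prod.ext hw11 rfl
    rw [← this]; exact hadj1
  · have : w2 = (2, w2.2) := Prod.ext hw21 rfl
    rw [← this]; exact hadj2a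
  · have e1 : w1 = (1, w1.2) := Prod.ext hw11 rfl
    have e2 : w2 = (2, w2.2) := Prod.ext hw21 rfl
    rw [← e1, ← e2]; exact hadj2b

lemma lift_tiling {n : ℕ} (c : Fin 3 → Fin (n+1)) (G : SimpleGraph (Fin 3 × Fin (n+1)))
    (h01 : G.Adj (0, c 0) (1, c 1)) (h02 : G.Adj (0, c 0) (2, c 2))
    (h12 : G.Adj (1, c 1) (2, c 2))
    (hT : TriTiling (G.comap (emb c))) : TriTiling G := by
  obtain ⟨T, hclique, hdisj, hcover⟩ := hT
  classical
  set Δ : Finset (Fin 3 × Fin (n+1)) := {(0, c 0), (1, c 1), (2, c 2)} with hΔ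
  have hΔmem : ∀ i : Fin 3, (i, c i) ∈ Δ := by
    intro i
    fin_cases i <;> simp [hΔ]
  have hΔclique : G.IsNClique 3 Δ := by
    rw [hΔ, SimpleGraph.is3Clique_triple_iff]
    exact ⟨h01, h02, h12⟩
  refine ⟨insert Δ (T.image fun s => s.image (emb c)), ?_, ?_, ?_⟩
  · intro s hs
    rcases mem_insert.mp hs with rfl | hs
    · exact hΔclique
    · obtain ⟨u, hu, rfl⟩ := mem_image.mp hs
      obtain ⟨hcl, hcard⟩ := hclique u hu
      constructor
      · rintro x hx y hy hne
        simp only [coe_image, Set.mem_image, mem_coe] at hx hy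
        obtain ⟨a, ha, rfl⟩ := hx
        obtain ⟨b, hb, rfl⟩ := hy
        have hab : a ≠ b := fun h => hne (h ▸ rfl)
        exact hcl ha hb hab
      · rw [card_image_of_injective _ (emb_inj c), hcard]
  · rintro s hs u hu hne
    simp only [coe_insert, Set.mem_insert_iff, coe_image, Set.mem_image, mem_coe] at hs hu
    have himΔ : ∀ w ∈ T, Disjoint Δ (w.image (emb c)) := by
      intro w _
      rw [disjoint_left]
      intro x hxΔ hxim
      obtain ⟨p, _, rfl⟩ := mem_image.mp hxim
      rw [hΔ] at hxΔ
      simp only [mem_insert, mem_singleton] at hxΔ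
      rcases hxΔ with h | h | h
      · exact emb_ne c p 0 h
      · exact emb_ne c p 1 h
      · exact emb_ne c p 2 h
    rcases hs with rfl | ⟨a, ha, rfl⟩ <;> rcases hu with rfl | ⟨b, hb, rfl⟩
    · exact absurd rfl hne
    · exact himΔ b hb
    · exact (himΔ a ha).symm
    · have hab : a ≠ b := fun h => hne (h ▸ rfl)
      have := hdisj (mem_coe.mpr ha) (mem_coe.mpr hb) hab
      simp only [Function.onFun, id] at this ⊢
      rw [disjoint_left] at this ⊢
      intro x hxa hxb
      obtain ⟨p, hp, rfl⟩ := mem_image.mp hxa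
      obtain ⟨q, hq, hqe⟩ := mem_image.mp hxb
      exact absurd ((emb_inj c hqe) ▸ hq) (this hp)
  · intro v
    by_cases hv : v.2 = c v.1
    · refine ⟨Δ, mem_insert_self _ _, ?_⟩
      have : v = (v.1, c v.1) := Prod.ext rfl hv
      rw [this]
      exact hΔmem v.1
    · obtain ⟨p, rfl⟩ := emb_surj c v hv
      obtain ⟨s, hs, hps⟩ := hcover p
      exact ⟨s.image (emb c), mem_insert_of_mem (mem_image_of_mem _ hs),
        mem_image_of_mem _ hps⟩

lemma nonclass_card (m : ℕ) (j : Fin 3) :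
    (univ.filter fun w : Fin 3 × Fin m => w.1 ≠ j).card = 2*m := by
  have : (univ.filter fun w : Fin 3 × Fin m => w.1 ≠ j)
      = (({j} : Finset (Fin 3))ᶜ) ×ˢ (univ : Finset (Fin m)) := by
    ext ⟨a, b⟩
    simp [Finset.mem_product]
  rw [this, card_product, card_compl, card_singleton, card_univ, Fintype.card_fin,
    Fintype.card_fin]

lemma step_a (t : ℕ) (G : SimpleGraph (Fin 3 × Fin (3*t+1))) [DecidableRel G.Adj]
    (htri : ∀ u v : Fin 3 × Fin (3*t+1), G.Adj u v → u.1 ≠ v.1)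
    (hdeg : ∀ v : Fin 3 × Fin (3*t+1), ∀ i, i ≠ v.1 →
      (univ.filter fun w : Fin 3 × Fin (3*t+1) => w.1 = i ∧ G.Adj v w).card ≥ 2*t+1)
    (c : Fin 3 → Fin (3*t+1))
    (φ : (G.comap (emb c)) ≃g blowup (gammaGraph 3) t) :
    ∀ p : Fin 3 × Fin (3*t), ∀ j, j ≠ p.1 → G.Adj (emb c p) (j, c j) := by
  intro p j hj
  classical
  set d' : Fin 3 → ℕ := fun k =>
    (univ.filter fun w : Fin 3 × Fin (3*t) => w.1 = k ∧ (G.comap (emb c)).Adj p w).card with hd'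
  set dG : Fin 3 → ℕ := fun k =>
    (univ.filter fun w : Fin 3 × Fin (3*t+1) => w.1 = k ∧ G.Adj (emb c p) w).card with hdG
  set e : Fin 3 → ℕ := fun k => if G.Adj (emb c p) (k, c k) then 1 else 0 with he
  have hkey : e j = 1 := by
    apply key3 t p.1 j hj d' dG e
    · have h1 := degree_split (G.comap (emb c)) p
      rw [Fin.sum_univ_three] at h1
      have h2 : (G.comap (emb c)).degree p = 4*t := by
        rw [iso_degree _ _ φ, blowup_degree]
      rw [h2] at h1
      exact h1.symm
    · rw [hd']
      simp only []
      rw [card_eq_zero, filter_eq_empty_iff]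
      rintro w - ⟨h1, h2⟩
      exact (htri _ _ h2) (by exact h1.symm)
    · intro k
      exact filter_card_le c G p k
    · intro k
      rw [he]; simp only []; split_ifs <;> omega
    · intro k hk
      exact hdeg (emb c p) k hk
  rw [he] at hkey
  simp only [] at hkey
  split_ifs at hkey with h
  exact h

/-- If the tripartite Corrádi–Hajnal theorem holds for all multiples of 3 beyond
`N0`, then for `N = 3t + 1` with `3t ≥ N0`, every balanced tripartite graph on `3N`
vertices with minimum degree `⌈(2/3)N⌉ = 2t + 1` into each other class has a
perfect triangle tiling. -/
theorem stmt_16 (N0 : ℕ)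
    (H : ∀ N : ℕ, 3 ∣ N → N ≥ N0 → ∀ (G : SimpleGraph (Fin 3 × Fin N)),
      ∀ [DecidableRel G.Adj],
      (∀ u v : Fin 3 × Fin N, G.Adj u v → u.1 ≠ v.1) →
      (∀ v : Fin 3 × Fin N, ∀ i, i ≠ v.1 →
        3 * (Finset.univ.filter fun w : Fin 3 × Fin N => w.1 = i ∧ G.Adj v w).card
          ≥ 2 * N) →
      TriTiling G ∨ ∃ t : ℕ, N = 3 * t ∧ Odd t ∧
        Nonempty (G ≃g blowup (gammaGraph 3) t)) :
    ∀ t : ℕ, 3 * t ≥ N0 → ∀ (G : SimpleGraph (Fin 3 × Fin (3 * t + 1))),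
      ∀ [DecidableRel G.Adj],
      (∀ u v : Fin 3 × Fin (3 * t + 1), G.Adj u v → u.1 ≠ v.1) →
      (∀ v : Fin 3 × Fin (3 * t + 1), ∀ i, i ≠ v.1 →
        (Finset.univ.filter fun w : Fin 3 × Fin (3 * t + 1) =>
          w.1 = i ∧ G.Adj v w).card ≥ 2 * t + 1) →
      TriTiling G := by
  intro t ht G hdec htri hdeg
  obtain ⟨x0, x1, x2, h01, h02, h12⟩ := exists_triangle t G hdeg
  have applyH : ∀ (c : Fin 3 → Fin (3*t+1)),
      TriTiling (G.comap (emb c)) ∨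
        (Odd t ∧ Nonempty ((G.comap (emb c)) ≃g blowup (gammaGraph 3) t)) := by
    intro c
    have h3 : (3:ℕ) ∣ 3*t := ⟨t, rfl⟩
    have hres := H (3*t) h3 ht (G.comap (emb c))
      (fun u v huv => htri _ _ huv)
      (by
        intro v j hj
        have hge := filter_card_ge c G v j
        have h2 := hdeg (emb c v) j hj
        omega)
    rcases hres with h | ⟨t', ht', hodd, hiso⟩
    · exact Or.inl h
    · have htt : t' = t := by omega
      subst htt
      exact Or.inr ⟨hodd, hiso⟩
  have hc0 : (![x0, x1, x2] : Fin 3 → Fin (3*t+1)) 0 = x0 := rfl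
  have hc1 : (![x0, x1, x2] : Fin 3 → Fin (3*t+1)) 1 = x1 := rfl
  have hc2 : (![x0, x1, x2] : Fin 3 → Fin (3*t+1)) 2 = x2 := rfl
  set c : Fin 3 → Fin (3*t+1) := ![x0, x1, x2] with hcdef
  rcases applyH c with htile | ⟨hodd, ⟨φ⟩⟩
  · exact lift_tiling c G (by rw [hc0, hc1]; exact h01) (by rw [hc0, hc2]; exact h02)
      (by rw [hc1, hc2]; exact h12) htile
  · have ht1 : 1 ≤ t := by
      rcases hodd with ⟨k, hk⟩; omega
    have stepa := step_a t G htri hdeg c φ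
    -- find an edge of G' between class 1 and class 2
    set y1 : Fin 3 × Fin (3*t) := (1, ⟨0, by omega⟩) with hy1
    have hedge : (univ.filter fun w : Fin 3 × Fin (3*t) =>
        w.1 = 2 ∧ (G.comap (emb c)).Adj y1 w).Nonempty := by
      rw [← card_pos]
      have hge := filter_card_ge c G y1 2
      have h2 := hdeg (emb c y1) 2 (show (2:Fin 3) ≠ 1 by decide)
      omega
    obtain ⟨w2, hw2⟩ := hedge
    rw [mem_filter] at hw2
    obtain ⟨-, hw21, hadjw⟩ := hw2
    set b : Fin 3 × Fin (3*t+1) := emb c y1 with hbdef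
    set d : Fin 3 × Fin (3*t+1) := emb c w2 with hddef
    have hb1 : b.1 = 1 := rfl
    have hd2 : d.1 = 2 := hw21
    set c2 : Fin 3 → Fin (3*t+1) := ![c 0, b.2, d.2] with hc2def
    have hc20 : c2 0 = c 0 := rfl
    have hc21 : c2 1 = b.2 := rfl
    have hc22 : c2 2 = d.2 := rfl
    have hbeq : (1, c2 1) = b := by rw [hc21, ← hb1]
    have hdeq : (2, c2 2) = d := by rw [hc22, ← hd2]
    have a01 : G.Adj (0, c2 0) (1, c2 1) := by
      rw [hbeq, hc20]
      exact (stepa y1 0 (show (0:Fin 3) ≠ 1 by decide)).symm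
    have a02 : G.Adj (0, c2 0) (2, c2 2) := by
      rw [hdeq, hc20]
      exact (stepa w2 0 (by rw [hw21]; decide)).symm
    have a12 : G.Adj (1, c2 1) (2, c2 2) := by
      rw [hbeq, hdeq]
      exact hadjw
    rcases applyH c2 with htile2 | ⟨-, ⟨ψ⟩⟩
    · exact lift_tiling c2 G a01 a02 a12 htile2
    · exfalso
      have hne1 : c 1 ≠ c2 1 := by
        rw [hc21, hbdef]
        exact (Fin.succAbove_ne (c 1) y1.2).symm
      obtain ⟨z, hz⟩ := Fin.exists_succAbove_eq hne1
      set Y : Fin 3 × Fin (3*t) := (1, z) with hY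
      have hYemb : emb c2 Y = (1, c 1) := Prod.ext rfl hz
      have hYdeg : (G.comap (emb c2)).degree Y = 4*t := by
        rw [iso_degree _ _ ψ, blowup_degree]
      have hnbr : ∀ w : Fin 3 × Fin (3*t), w.1 ≠ 1 → (G.comap (emb c2)).Adj Y w := by
        intro w hw
        show G.Adj (emb c2 Y) (emb c2 w)
        rw [hYemb]
        rcases fin3_cases w.1 with h0 | h1 | h2'
        · have hew : emb c2 w = emb c (0, w.2) := by
            show (w.1, (c2 w.1).succAbove w.2) = (0, (c 0).succAbove w.2)
            rw [h0, hc20]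
          rw [hew]
          exact (stepa (0, w.2) 1 (show (1:Fin 3) ≠ 0 by decide)).symm
        · exact absurd h1 hw
        · by_cases hv2 : (c2 2).succAbove w.2 = c 2
          · have hew : emb c2 w = (2, c 2) := by
              show (w.1, (c2 w.1).succAbove w.2) = (2, c 2)
              rw [h2', hv2]
            rw [hew]
            exact h12
          · obtain ⟨z', hz'⟩ := Fin.exists_succAbove_eq hv2
            have hew : emb c2 w = emb c (2, z') := by
              show (w.1, (c2 w.1).succAbove w.2) = (2, (c 2).succAbove z')
              rw [h2', hz']
            rw [hew]
            exact (stepa (2, z') 1 (show (1:Fin 3) ≠ 2 by decide)).symm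
      have hsub : (univ.filter fun w : Fin 3 × Fin (3*t) => w.1 ≠ 1)
          ⊆ (G.comap (emb c2)).neighborFinset Y := by
        intro w hw
        rw [SimpleGraph.mem_neighborFinset]
        exact hnbr w (mem_filter.mp hw).2
      have hfin := card_le_card hsub
      rw [SimpleGraph.card_neighborFinset_eq_degree, hYdeg, nonclass_card] at hfin
      omega
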